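/- Let X ⊆ ℝ^{n} be a set satisfying: there is a constant k such that any two points of X are joined by a C¹ curve in X of speed at most k times their distance. Let g, h : X → ℝ be L-Lipschitz functions with g < h pointwise, and let C := {(x, r) : x ∈ X, g(x) < r < h(x)} ⊆ ℝ^{n+1}. Then there exists a constant K, depending only on k and L, such that any two points of C can be joined by a C¹ curve γ : [0,1] → C with |γ'(t)| ≤ K|x − y| for all t (where x, y are the endpoints). In particular, C satisfies the Whitney arc property: any two points x, y ∈ C are joined by a rectifiable curve in C of length at most K|x − y|. -/

import Mathlib

open MeasureTheory Set ENNReal Filter Topology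
noncomputable section

abbrev E (n : ℕ) := EuclideanSpace ℝ (Fin n)

/-- There is a C¹ curve in `S` from `x` to `y` of speed at most `c * ‖x − y‖`. -/
def HasCurve {V : Type*} [NormedAddCommGroup V] [NormedSpace ℝ V]
    (S : Set V) (c : ℝ) (x y : V) : Prop :=
  ∃ γ : ℝ → V, γ 0 = x ∧ γ 1 = y ∧ (∀ t ∈ Set.Icc (0:ℝ) 1, γ t ∈ S) ∧
    ContDiffOn ℝ 1 γ (Set.Icc 0 1) ∧
    ∀ t ∈ Set.Icc (0:ℝ) 1, ‖derivWithin γ (Set.Icc 0 1) t‖ ≤ c * ‖x - y‖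

/-- The "cylinder" C = {(x,r) : x ∈ X, g x < r < h x}, inside the ℓ²-product ℝ^n ×₂ ℝ. -/
def Cyl {n : ℕ} (X : Set (E n)) (g h : E n → ℝ) : Set (WithLp 2 (E n × ℝ)) :=
  {p | (WithLp.equiv 2 (E n × ℝ) p).1 ∈ X ∧
    g (WithLp.equiv 2 (E n × ℝ) p).1 < (WithLp.equiv 2 (E n × ℝ) p).2 ∧
    (WithLp.equiv 2 (E n × ℝ) p).2 < h (WithLp.equiv 2 (E n × ℝ) p).1}

lemma aux_norm_deriv_le {F : Type*} [NormedAddCommGroup F] [NormedSpace ℝ F]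
    {f : ℝ → F} {s : Set ℝ} {t : ℝ} {c : F} {C : ℝ}
    (hd : HasDerivWithinAt f c s t) (hne : (𝓝[s \ {t}] t).NeBot)
    (hlip : ∀ u ∈ s, ‖f u - f t‖ ≤ C * |u - t|) : ‖c‖ ≤ C := by
  rw [hasDerivWithinAt_iff_tendsto_slope] at hd
  refine le_of_tendsto hd.norm ?_
  filter_upwards [self_mem_nhdsWithin] with w hw
  obtain ⟨hws, hwt⟩ := hw
  have hwt' : w ≠ t := hwt
  have h0 : 0 < |w - t| := abs_pos.2 (sub_ne_zero.2 hwt')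
  rw [slope_def_module, norm_smul, norm_inv, Real.norm_eq_abs]
  calc |w - t|⁻¹ * ‖f w - f t‖ ≤ |w - t|⁻¹ * (C * |w - t|) := by
        exact mul_le_mul_of_nonneg_left (hlip w hws) (by positivity)
    _ = C := by field_simp

lemma aux_neBot {t : ℝ} (ht : t ∈ Icc (0:ℝ) 1) : (𝓝[Icc (0:ℝ) 1 \ {t}] t).NeBot := by
  rcases lt_or_eq_of_le ht.2 with h1 | h1
  · have hsub : Ioc t 1 ⊆ Icc (0:ℝ) 1 \ {t} := fun w hw =>
      ⟨⟨le_trans ht.1 hw.1.le, hw.2⟩, ne_of_gt hw.1⟩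
    have : (𝓝[Ioc t 1] t).NeBot := by
      rw [← mem_closure_iff_nhdsWithin_neBot, closure_Ioc (ne_of_lt h1)]
      exact ⟨le_refl t, h1.le⟩
    exact this.mono (nhdsWithin_mono t hsub)
  · subst h1
    have hsub : Ico (0:ℝ) 1 ⊆ Icc (0:ℝ) 1 \ {1} := fun w hw =>
      ⟨⟨hw.1, hw.2.le⟩, ne_of_lt hw.2⟩
    have : (𝓝[Ico (0:ℝ) 1] 1).NeBot := by
      rw [← mem_closure_iff_nhdsWithin_neBot, closure_Ico (by norm_num : (0:ℝ) ≠ 1)]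
      exact ⟨zero_le_one, le_refl 1⟩
    exact this.mono (nhdsWithin_mono 1 hsub)


lemma aux_norm_eq (n : ℕ) (a : E n) (b : ℝ) :
    ‖(WithLp.prodContinuousLinearEquiv 2 ℝ (E n) ℝ).symm (a, b)‖
      = Real.sqrt (‖a‖ ^ 2 + |b| ^ 2) := by
  have hz := WithLp.prod_norm_eq_of_L2 ((WithLp.prodContinuousLinearEquiv 2 ℝ (E n) ℝ).symm (a, b))
  have hf : ((WithLp.prodContinuousLinearEquiv 2 ℝ (E n) ℝ).symm (a, b)).fst = a := rfl
  have hs2 : ((WithLp.prodContinuousLinearEquiv 2 ℝ (E n) ℝ).symm (a, b)).snd = b := rfl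
  rw [hf, hs2, Real.norm_eq_abs] at hz
  exact hz

lemma aux_point (n : ℕ) (p : WithLp 2 (E n × ℝ)) :
    (WithLp.prodContinuousLinearEquiv 2 ℝ (E n) ℝ).symm
      ((WithLp.equiv 2 (E n × ℝ) p).1, (WithLp.equiv 2 (E n × ℝ) p).2) = p := rfl

lemma aux_norm_le (n : ℕ) (a : E n) (b : ℝ) :
    ‖(WithLp.prodContinuousLinearEquiv 2 ℝ (E n) ℝ).symm (a, b)‖ ≤ ‖a‖ + |b| := by
  rw [aux_norm_eq n a b]
  have h2 : ‖a‖ ^ 2 + |b| ^ 2 ≤ (‖a‖ + |b|) ^ 2 := by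
    nlinarith [norm_nonneg a, abs_nonneg b, mul_nonneg (norm_nonneg a) (abs_nonneg b)]
  calc Real.sqrt (‖a‖ ^ 2 + |b| ^ 2) ≤ Real.sqrt ((‖a‖ + |b|) ^ 2) := Real.sqrt_le_sqrt h2
    _ = ‖a‖ + |b| := Real.sqrt_sq (by positivity)

instance aux_inst (n : ℕ) : ContinuousSMul ℝ (WithLp 2 (E n × ℝ)) := IsBoundedSMul.continuousSMul

set_option maxHeartbeats 1000000 in
lemma aux_hasDeriv {n : ℕ} {f : ℝ → E n} {Gf : ℝ → ℝ} {f' : E n} {G' : ℝ} {s : Set ℝ} {t : ℝ}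
    (hf : HasDerivWithinAt f f' s t) (hG : HasDerivWithinAt Gf G' s t) :
    HasDerivWithinAt (fun w => (WithLp.prodContinuousLinearEquiv 2 ℝ (E n) ℝ).symm (f w, Gf w))
      ((WithLp.prodContinuousLinearEquiv 2 ℝ (E n) ℝ).symm (f', G')) s t := by
  have h := ((WithLp.prodContinuousLinearEquiv 2 ℝ (E n) ℝ).symm.hasFDerivAt
    (x := (f t, Gf t))).comp_hasDerivWithinAt t (hf.prodMk hG)
  exact h

set_option maxHeartbeats 1000000 in
theorem stmt6 (n : ℕ) (k L : ℝ) (hk : 0 < k) (hL : 0 < L) :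
    ∃ K : ℝ, 0 < K ∧
      ∀ (X : Set (E n)) (g h : E n → ℝ),
        (∀ x ∈ X, ∀ y ∈ X, HasCurve X k x y) →
        ContDiffOn ℝ 1 g X → ContDiffOn ℝ 1 h X →
        (∀ x ∈ X, ∀ y ∈ X, |g x - g y| ≤ L * ‖x - y‖) →
        (∀ x ∈ X, ∀ y ∈ X, |h x - h y| ≤ L * ‖x - y‖) →
        (∀ x ∈ X, g x < h x) →
        ∀ p ∈ Cyl X g h, ∀ q ∈ Cyl X g h, HasCurve (Cyl X g h) K p q := by
  refine ⟨k + 5*L*k + 3*L + 1, by positivity, ?_⟩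
  intro X g h hX hg hh hgL hhL hgh p hp q hq
  set x : E n := (WithLp.equiv 2 (E n × ℝ) p).1 with hx_def
  set r : ℝ := (WithLp.equiv 2 (E n × ℝ) p).2 with hr_def
  set y : E n := (WithLp.equiv 2 (E n × ℝ) q).1 with hy_def
  set s : ℝ := (WithLp.equiv 2 (E n × ℝ) q).2 with hs_def
  obtain ⟨hxX, hgr, hrh⟩ := hp
  obtain ⟨hyX, hgs, hsh⟩ := hq
  obtain ⟨γ, hγ0, hγ1, hγmem, hγC, hγd⟩ := hX x hxX y hyX
  set d : ℝ := ‖x - y‖ with hd_def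
  set P : ℝ := ‖p - q‖ with hP_def
  have hd0 : 0 ≤ d := norm_nonneg _
  have hP0 : 0 ≤ P := norm_nonneg _
  -- component bounds
  have hPsq : P ^ 2 = d ^ 2 + |r - s| ^ 2 := by
    have := WithLp.prod_norm_sq_eq_of_L2 (p - q)
    have h1 : (p - q).fst = x - y := rfl
    have h2 : (p - q).snd = r - s := rfl
    rw [h1, h2] at this
    simpa [Real.norm_eq_abs] using this
  have hdP : d ≤ P := by nlinarith [sq_nonneg (r - s), abs_nonneg (r - s)]
  have hrsP : |r - s| ≤ P := by nlinarith [abs_nonneg (r - s)]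
  -- Lipschitz bound for γ
  have hγdiff : DifferentiableOn ℝ γ (Icc 0 1) := hγC.differentiableOn one_ne_zero
  have hγLip : ∀ a ∈ Icc (0:ℝ) 1, ∀ b ∈ Icc (0:ℝ) 1, ‖γ b - γ a‖ ≤ k * d * |b - a| := by
    intro a ha b hb
    have := (convex_Icc (0:ℝ) 1).norm_image_sub_le_of_norm_derivWithin_le
      hγdiff hγd hb ha
    rw [norm_sub_rev] at this
    simpa [Real.norm_eq_abs, abs_sub_comm] using this
  -- the functions u, v
  set u : ℝ → ℝ := fun t => g (γ t) with hu_def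
  set v : ℝ → ℝ := fun t => h (γ t) with hv_def
  have hmapsto : MapsTo γ (Icc 0 1) X := fun t ht => hγmem t ht
  have huC : ContDiffOn ℝ 1 u (Icc 0 1) := hg.comp hγC hmapsto
  have hvC : ContDiffOn ℝ 1 v (Icc 0 1) := hh.comp hγC hmapsto
  have huLip : ∀ a ∈ Icc (0:ℝ) 1, ∀ b ∈ Icc (0:ℝ) 1, |u b - u a| ≤ L * (k * d) * |b - a| := by
    intro a ha b hb
    calc |u b - u a| ≤ L * ‖γ b - γ a‖ := hgL _ (hγmem b hb) _ (hγmem a ha)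
      _ ≤ L * (k * d * |b - a|) := mul_le_mul_of_nonneg_left (hγLip a ha b hb) hL.le
      _ = L * (k * d) * |b - a| := by ring
  have hvLip : ∀ a ∈ Icc (0:ℝ) 1, ∀ b ∈ Icc (0:ℝ) 1, |v b - v a| ≤ L * (k * d) * |b - a| := by
    intro a ha b hb
    calc |v b - v a| ≤ L * ‖γ b - γ a‖ := hhL _ (hγmem b hb) _ (hγmem a ha)
      _ ≤ L * (k * d * |b - a|) := mul_le_mul_of_nonneg_left (hγLip a ha b hb) hL.le
      _ = L * (k * d) * |b - a| := by ring
  -- the interpolation parameters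
  have hDx : 0 < h x - g x := sub_pos.2 (hgh x hxX)
  have hDy : 0 < h y - g y := sub_pos.2 (hgh y hyX)
  set lam : ℝ := (r - g x) / (h x - g x) with hlam_def
  set mu : ℝ := (s - g y) / (h y - g y) with hmu_def
  have hlam0 : 0 < lam := div_pos (sub_pos.2 hgr) hDx
  have hlam1 : lam < 1 := (div_lt_one hDx).2 (by linarith)
  have hmu0 : 0 < mu := div_pos (sub_pos.2 hgs) hDy
  have hmu1 : mu < 1 := (div_lt_one hDy).2 (by linarith)
  have hlamx : lam * (h x - g x) = r - g x := div_mul_cancel₀ _ (ne_of_gt hDx)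
  have hmuy : mu * (h y - g y) = s - g y := div_mul_cancel₀ _ (ne_of_gt hDy)
  set ℓ : ℝ → ℝ := fun t => lam + (mu - lam) * t with hℓ_def
  have hℓ01 : ∀ t ∈ Icc (0:ℝ) 1, 0 < ℓ t ∧ ℓ t < 1 := by
    intro t ht
    obtain ⟨ht0, ht1⟩ := ht
    have hform : ℓ t = lam + (mu - lam) * t := rfl
    constructor
    · rw [hform]
      rcases le_total 0 (mu - lam) with hc | hc
      · nlinarith [mul_nonneg hc ht0]
      · nlinarith [mul_le_mul_of_nonpos_left ht1 hc]
    · rw [hform]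
      rcases le_total 0 (mu - lam) with hc | hc
      · nlinarith [mul_le_mul_of_nonneg_left ht1 hc]
      · nlinarith [mul_nonneg (neg_nonneg.2 hc) ht0]
  have hℓC : ContDiff ℝ 1 ℓ := by
    have : ℓ = fun t => lam + (mu - lam) * t := rfl
    rw [this]
    exact contDiff_const.add (contDiff_const.mul contDiff_id)
  set G : ℝ → ℝ := fun t => u t + ℓ t * (v t - u t) with hG_def
  have hGC : ContDiffOn ℝ 1 G (Icc 0 1) :=
    huC.add ((hℓC.contDiffOn).mul (hvC.sub huC))
  set eC := WithLp.prodContinuousLinearEquiv 2 ℝ (E n) ℝ with heC_def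
  set Γ : ℝ → WithLp 2 (E n × ℝ) := fun t => eC.symm (γ t, G t) with hΓ_def
  -- key: |mu - lam| ≤ 1 and  |lam - mu| * (h x - g x) ≤ P + 3*L*d
  have hml1 : |mu - lam| ≤ 1 := by rw [abs_le]; constructor <;> linarith
  have hkey : |(mu - lam) * (h x - g x)| ≤ P + 3 * L * d := by
    have e1 : (lam - mu) * (h x - g x)
        = (r - s) + (g y - g x) + mu * ((h y - g y) - (h x - g x)) := by
      linear_combination hlamx - hmuy
    have hgxy : |g y - g x| ≤ L * d := by
      have := hgL y hyX x hxX
      rwa [← norm_sub_rev] at this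
    have hhxy : |h y - h x| ≤ L * d := by
      have := hhL y hyX x hxX
      rwa [← norm_sub_rev] at this
    have hmu_abs : |mu| ≤ 1 := by rw [abs_le]; constructor <;> linarith
    have h3 : |(h y - g y) - (h x - g x)| ≤ 2 * (L * d) := by
      calc |(h y - g y) - (h x - g x)| = |(h y - h x) + -(g y - g x)| := by ring_nf
        _ ≤ |h y - h x| + |-(g y - g x)| := abs_add_le _ _
        _ = |h y - h x| + |g y - g x| := by rw [abs_neg]
        _ ≤ 2 * (L * d) := by linarith
    have h4 : |mu * ((h y - g y) - (h x - g x))| ≤ 2 * (L * d) := by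
      rw [abs_mul]
      calc |mu| * |(h y - g y) - (h x - g x)| ≤ 1 * (2 * (L * d)) := by
            apply mul_le_mul hmu_abs h3 (abs_nonneg _) zero_le_one
        _ = 2 * (L * d) := by ring
    have h5 : |(lam - mu) * (h x - g x)| ≤ P + 3 * L * d := by
      rw [e1]
      calc |(r - s) + (g y - g x) + mu * ((h y - g y) - (h x - g x))|
          ≤ |(r - s) + (g y - g x)| + |mu * ((h y - g y) - (h x - g x))| := abs_add_le _ _
        _ ≤ |r - s| + |g y - g x| + |mu * ((h y - g y) - (h x - g x))| := by
            linarith [abs_add_le (r - s) (g y - g x)]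
        _ ≤ P + 3 * L * d := by linarith
    calc |(mu - lam) * (h x - g x)| = |(lam - mu) * (h x - g x)| := by
          rw [← abs_neg]; ring_nf
      _ ≤ P + 3 * L * d := h5
  -- v t - u t bounds
  have hu0 : u 0 = g x := by rw [hu_def]; simp [hγ0]
  have hv0 : v 0 = h x := by rw [hv_def]; simp [hγ0]
  have hvu_pos : ∀ t ∈ Icc (0:ℝ) 1, 0 < v t - u t := fun t ht =>
    sub_pos.2 (hgh _ (hγmem t ht))
  have hvu_le : ∀ t ∈ Icc (0:ℝ) 1, v t - u t ≤ (h x - g x) + 2 * (L * (k * d)) := by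
    intro t ht
    have h1 := huLip 0 (by norm_num) t ht
    have h2 := hvLip 0 (by norm_num) t ht
    have ht' : |t - 0| ≤ 1 := by
      rw [sub_zero, abs_of_nonneg ht.1]; exact ht.2
    have hLkd : 0 ≤ L * (k * d) := by positivity
    have h1' : |u t - u 0| ≤ L * (k * d) := by
      calc |u t - u 0| ≤ L * (k * d) * |t - 0| := h1
        _ ≤ L * (k * d) * 1 := mul_le_mul_of_nonneg_left ht' hLkd
        _ = L * (k * d) := by ring
    have h2' : |v t - v 0| ≤ L * (k * d) := by
      calc |v t - v 0| ≤ L * (k * d) * |t - 0| := h2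
        _ ≤ L * (k * d) * 1 := mul_le_mul_of_nonneg_left ht' hLkd
        _ = L * (k * d) := by ring
    linarith [(abs_le.1 h1').1, (abs_le.1 h1').2, (abs_le.1 h2').1, (abs_le.1 h2').2, hu0, hv0]
  refine ⟨Γ, ?_, ?_, ?_, ?_, ?_⟩
  · -- Γ 0 = p
    have hG0 : G 0 = r := by
      have h3 : ℓ 0 = lam := by show lam + (mu - lam) * 0 = lam; ring
      show u 0 + ℓ 0 * (v 0 - u 0) = r
      rw [hu0, hv0, h3, hlamx]; ring
    show eC.symm (γ 0, G 0) = p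
    rw [hγ0, hG0]
    exact aux_point n p
  · -- Γ 1 = q
    have hG1 : G 1 = s := by
      have h1 : u 1 = g y := by rw [hu_def]; simp [hγ1]
      have h2 : v 1 = h y := by rw [hv_def]; simp [hγ1]
      have h3 : ℓ 1 = mu := by show lam + (mu - lam) * 1 = mu; ring
      show u 1 + ℓ 1 * (v 1 - u 1) = s
      rw [h1, h2, h3, hmuy]; ring
    show eC.symm (γ 1, G 1) = q
    rw [hγ1, hG1]
    exact aux_point n q
  · -- membership
    intro t ht
    obtain ⟨hℓt0, hℓt1⟩ := hℓ01 t ht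
    have hvt := hvu_pos t ht
    refine ⟨hγmem t ht, ?_, ?_⟩
    · show g (γ t) < G t
      have : G t - u t = ℓ t * (v t - u t) := by rw [hG_def]; ring
      nlinarith [mul_pos hℓt0 hvt]
    · show G t < h (γ t)
      have : v t - G t = (1 - ℓ t) * (v t - u t) := by rw [hG_def]; ring
      nlinarith [mul_pos (sub_pos.2 hℓt1) hvt]
  · -- smoothness
    have hpair : ContDiffOn ℝ 1 (fun t => (γ t, G t)) (Icc 0 1) := hγC.prodMk hGC
    exact eC.symm.contDiff.comp_contDiffOn hpair
  · -- derivative bound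
    intro t ht
    rw [show (k + 5*L*k + 3*L + 1) * ‖p - q‖ = (k + 5*L*k + 3*L + 1) * P from rfl]
    clear_value x r y s d P u v lam mu ℓ G eC Γ
    have hUD : UniqueDiffWithinAt ℝ (Icc (0:ℝ) 1) t := uniqueDiffOn_Icc zero_lt_one t ht
    obtain ⟨γ', hγt, hγ'eq⟩ : ∃ c, HasDerivWithinAt γ c (Icc 0 1) t ∧
        derivWithin γ (Icc 0 1) t = c := ⟨_, (hγdiff t ht).hasDerivWithinAt, rfl⟩
    obtain ⟨u', hut, hu'eq⟩ : ∃ c, HasDerivWithinAt u c (Icc 0 1) t ∧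
        derivWithin u (Icc 0 1) t = c := ⟨_, ((huC.differentiableOn one_ne_zero) t ht).hasDerivWithinAt, rfl⟩
    obtain ⟨v', hvt, hv'eq⟩ : ∃ c, HasDerivWithinAt v c (Icc 0 1) t ∧
        derivWithin v (Icc 0 1) t = c := ⟨_, ((hvC.differentiableOn one_ne_zero) t ht).hasDerivWithinAt, rfl⟩
    have hℓt : HasDerivWithinAt ℓ (mu - lam) (Icc 0 1) t := by
      rw [hℓ_def]
      have h1 : HasDerivAt (fun w : ℝ => lam + (mu - lam) * w) ((mu - lam) * 1) t :=
        ((hasDerivAt_id t).const_mul (mu - lam)).const_add lam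
      exact (by simpa using h1 : HasDerivAt (fun w : ℝ => lam + (mu - lam) * w) (mu - lam) t).hasDerivWithinAt
    set G' := u' + ((mu - lam) * (v t - u t) + ℓ t * (v' - u')) with hG'_def
    have hGt : HasDerivWithinAt G G' (Icc 0 1) t := by
      rw [hG'_def, hG_def]
      exact hut.add (hℓt.mul (hvt.sub hut))
    have hpairt : HasDerivWithinAt (fun w => (γ w, G w)) (γ', G') (Icc 0 1) t :=
      hγt.prodMk hGt
    have hΓt : HasDerivWithinAt Γ (eC.symm (γ', G')) (Icc 0 1) t := by
      rw [hΓ_def, heC_def]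
      exact aux_hasDeriv hγt hGt
    have hder : derivWithin Γ (Icc 0 1) t = eC.symm (γ', G') := hΓt.derivWithin hUD
    rw [hder]
    -- norm of the value
    have hnorm : ‖eC.symm (γ', G')‖ ≤ ‖γ'‖ + |G'| := by
      rw [heC_def]; exact aux_norm_le n γ' G'
    -- bounds on each
    have hγ'le : ‖γ'‖ ≤ k * d := by
      have hb := hγd t ht
      rw [hγ'eq] at hb
      exact hb
    have hu'le : |u'| ≤ L * (k * d) := by
      have := aux_norm_deriv_le hut (aux_neBot ht) (fun w hw => by
        simpa [Real.norm_eq_abs] using huLip t ht w hw)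
      simpa [Real.norm_eq_abs] using this
    have hv'le : |v'| ≤ L * (k * d) := by
      have := aux_norm_deriv_le hvt (aux_neBot ht) (fun w hw => by
        simpa [Real.norm_eq_abs] using hvLip t ht w hw)
      simpa [Real.norm_eq_abs] using this
    have hℓt01 := hℓ01 t ht
    have hℓabs : |ℓ t| ≤ 1 := by
      rw [abs_le]; constructor <;> linarith [hℓt01.1, hℓt01.2]
    have hG'le : |G'| ≤ 5 * (L * (k * d)) + 3 * L * d + P := by
      have hb1 : |(mu - lam) * (v t - u t)| ≤ (P + 3 * L * d) + 2 * (L * (k * d)) := by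
        rw [abs_mul]
        have hvu1 := hvu_pos t ht
        have hvu2 := hvu_le t ht
        have : |v t - u t| = v t - u t := abs_of_pos hvu1
        rw [this]
        have step : |mu - lam| * (v t - u t)
            ≤ |mu - lam| * ((h x - g x) + 2 * (L * (k * d))) :=
          mul_le_mul_of_nonneg_left hvu2 (abs_nonneg _)
        have step2 : |mu - lam| * ((h x - g x) + 2 * (L * (k * d)))
            = |mu - lam| * (h x - g x) + |mu - lam| * (2 * (L * (k * d))) := by ring
        have step3 : |mu - lam| * (h x - g x) ≤ P + 3 * L * d := by
          have := hkey
          rwa [abs_mul, abs_of_pos hDx] at this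
        have step4 : |mu - lam| * (2 * (L * (k * d))) ≤ 2 * (L * (k * d)) := by
          calc |mu - lam| * (2 * (L * (k * d))) ≤ 1 * (2 * (L * (k * d))) :=
                mul_le_mul_of_nonneg_right hml1 (by positivity)
            _ = 2 * (L * (k * d)) := by ring
        linarith
      have hb2 : |ℓ t * (v' - u')| ≤ 2 * (L * (k * d)) := by
        rw [abs_mul]
        have : |v' - u'| ≤ 2 * (L * (k * d)) := by
          calc |v' - u'| ≤ |v'| + |u'| := abs_sub _ _
            _ ≤ 2 * (L * (k * d)) := by linarith
        calc |ℓ t| * |v' - u'| ≤ 1 * (2 * (L * (k * d))) :=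
              mul_le_mul hℓabs this (abs_nonneg _) zero_le_one
          _ = 2 * (L * (k * d)) := by ring
      calc |G'| ≤ |u'| + (|(mu - lam) * (v t - u t)| + |ℓ t * (v' - u')|) := by
            rw [hG'_def]
            refine le_trans (abs_add_le _ _) ?_
            exact add_le_add_right (abs_add_le _ _) _
        _ ≤ 5 * (L * (k * d)) + 3 * L * d + P := by linarith
    have hkd : k * d ≤ k * P := mul_le_mul_of_nonneg_left hdP hk.le
    have hLkd : L * (k * d) ≤ L * (k * P) := by
      apply mul_le_mul_of_nonneg_left hkd hL.le
    have hLd : L * d ≤ L * P := mul_le_mul_of_nonneg_left hdP hL.le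
    calc ‖eC.symm (γ', G')‖ ≤ ‖γ'‖ + |G'| := hnorm
      _ ≤ k * d + (5 * (L * (k * d)) + 3 * L * d + P) := by
          linarith only [hγ'le, hG'le]
      _ ≤ (k + 5*L*k + 3*L + 1) * P := by
          linarith only [hkd, hLkd, hLd, hP0]
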